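/- Let w ∈ L¹(ℝ³) with ∫ w = a, and let u ∈ L²(ℝ³) ∩ L^∞(ℝ³) be such that |u|² is Lipschitz with Lipschitz constant L, and suppose |w(z)| ≤ C|z|^{−γ} for |z| ≥ 1 with γ > 3. Let w_N(x) = N^{3β} w(N^β x) with β > 0 and α := β(γ−3)/(γ−2). Then ‖a|u|² − w_N * |u|²‖_∞ ≤ ‖w‖₁ L N^{−α} + (8πC/(γ−3)) ‖u‖_∞² N^{−α}. -/

import Mathlib

open MeasureTheory Real

open Metric Set in

lemma vol_ball3' : (volume (Metric.ball (0:EuclideanSpace ℝ (Fin 3)) 1)).toReal = 4*π/3 := by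
  rw [EuclideanSpace.volume_ball]
  have h1 : Real.Gamma ((Fintype.card (Fin 3) : ℝ) / 2 + 1) = 3/4 * Real.sqrt π := by
    have : ((Fintype.card (Fin 3) : ℝ) / 2 + 1) = (3:ℝ)/2 + 1 := by norm_num
    rw [this, Real.Gamma_add_one (by norm_num)]
    have : (3:ℝ)/2 = 1/2 + 1 := by norm_num
    rw [this, Real.Gamma_add_one (by norm_num), Real.Gamma_one_half_eq]
    ring
  rw [h1]
  have hs : Real.sqrt π ^ Fintype.card (Fin 3) = π * Real.sqrt π := by
    have : Fintype.card (Fin 3) = 3 := by simp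
    rw [this]
    have := Real.sq_sqrt (le_of_lt Real.pi_pos)
    nlinarith [Real.sqrt_nonneg π]
  rw [hs]
  have hne : Real.sqrt π ≠ 0 := by positivity
  have : π * Real.sqrt π / (3 / 4 * Real.sqrt π) = 4*π/3 := by
    field_simp
  rw [this]
  simp [ENNReal.toReal_ofReal (by positivity : (0:ℝ) ≤ 4*π/3)]

open Metric Set in

lemma tail_integral' {γ R : ℝ} (hγ : 3 < γ) (hR : 0 < R) :
    ∫ z in {z : EuclideanSpace ℝ (Fin 3) | R < ‖z‖}, ‖z‖ ^ (-γ)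
      = (4*π/(γ-3)) * R ^ (3-γ) := by
  have hvol : (volume (Metric.ball (0:EuclideanSpace ℝ (Fin 3)) 1)).toReal = 4*π/3 := vol_ball3'
  set f : ℝ → ℝ := Set.indicator (Ioi R) (fun t => t ^ (-γ)) with hf
  have hmeasS : MeasurableSet {z : EuclideanSpace ℝ (Fin 3) | R < ‖z‖} :=
    measurableSet_lt measurable_const measurable_norm
  have h0 : ∫ z in {z : EuclideanSpace ℝ (Fin 3) | R < ‖z‖}, ‖z‖ ^ (-γ)
      = ∫ z : EuclideanSpace ℝ (Fin 3), f ‖z‖ := by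
    rw [← integral_indicator hmeasS]
    apply integral_congr_ae
    filter_upwards with z
    simp only [hf, Set.indicator_apply, Set.mem_setOf_eq, Set.mem_Ioi]
  rw [h0, integral_fun_norm_addHaar volume f]
  have hdim : Module.finrank ℝ (EuclideanSpace ℝ (Fin 3)) = 3 := by
    simp [finrank_euclideanSpace]
  rw [hdim, measureReal_def, hvol]
  have h1 : ∫ y in Ioi (0:ℝ), y ^ (3 - 1) • f y = ∫ y in Ioi R, y ^ (2 - γ) := by
    have hsub : Ioi R ⊆ Ioi (0:ℝ) := fun y hy => lt_trans hR hy
    have heq : ∀ y : ℝ, y ^ (3-1) • f y = Set.indicator (Ioi R) (fun t => t^(2:ℕ) * t ^ (-γ)) y := by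
      intro y
      by_cases h : y ∈ Ioi R
      · simp [hf, Set.indicator_apply, h, smul_eq_mul]
      · simp [hf, Set.indicator_apply, h, smul_eq_mul]
    simp_rw [heq]
    rw [integral_indicator measurableSet_Ioi, Measure.restrict_restrict measurableSet_Ioi,
      Set.inter_eq_left.mpr hsub]
    refine setIntegral_congr_fun measurableSet_Ioi fun y hy => ?_
    have hy0 : 0 < y := lt_trans hR hy
    rw [← Real.rpow_natCast y 2, ← Real.rpow_add hy0]
    ring_nf
  rw [h1, integral_Ioi_rpow_of_lt (by linarith) hR]
  have hg3 : γ - 3 ≠ 0 := by linarith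
  have hX : (0:ℝ) < R ^ (γ-3) := Real.rpow_pos_of_pos hR _
  rw [show 2 - γ + 1 = -(γ - 3) by ring, Real.rpow_neg hR.le,
    show (3 : ℝ) - γ = -(γ-3) by ring, Real.rpow_neg hR.le,
    nsmul_eq_mul, smul_eq_mul, neg_div_neg_eq]
  ring

open Metric Set in

lemma tail_integrable' {γ R : ℝ} (hγ : 3 < γ) (hR : 1 ≤ R) :
    IntegrableOn (fun z : EuclideanSpace ℝ (Fin 3) => ‖z‖ ^ (-γ))
      {z : EuclideanSpace ℝ (Fin 3) | R < ‖z‖} := by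
  have hmeasS : MeasurableSet {z : EuclideanSpace ℝ (Fin 3) | R < ‖z‖} :=
    measurableSet_lt measurable_const measurable_norm
  have hint : Integrable (fun z : EuclideanSpace ℝ (Fin 3) => (2:ℝ)^γ * (1 + ‖z‖) ^ (-γ)) :=
    (integrable_one_add_norm (by simp [finrank_euclideanSpace]; exact hγ)).const_mul _
  refine Integrable.mono' hint.integrableOn ?_ ?_
  · exact (Measurable.aestronglyMeasurable (by fun_prop)).restrict
  · rw [ae_restrict_iff' hmeasS]
    filter_upwards with z hz
    have hz1 : 1 ≤ ‖z‖ := hR.trans (le_of_lt hz)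
    have hz0 : 0 < ‖z‖ := by linarith
    rw [Real.norm_eq_abs, abs_of_nonneg (Real.rpow_nonneg (norm_nonneg z) _)]
    have h2 : (1 + ‖z‖) ^ (-γ) ≥ (2 * ‖z‖) ^ (-γ) := by
      apply Real.rpow_le_rpow_of_nonpos (by positivity) (by linarith) (by linarith)
    calc ‖z‖ ^ (-γ) = (2:ℝ)^γ * ((2:ℝ)^(-γ) * ‖z‖ ^ (-γ)) := by
          rw [← mul_assoc, ← Real.rpow_add (by norm_num : (0:ℝ) < 2)]
          simp
      _ = (2:ℝ)^γ * (2 * ‖z‖) ^ (-γ) := by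
          rw [Real.mul_rpow (by norm_num) (norm_nonneg z)]
      _ ≤ (2:ℝ)^γ * (1 + ‖z‖) ^ (-γ) := by
          apply mul_le_mul_of_nonneg_left h2 (Real.rpow_nonneg (by norm_num) _)

open Metric Set in
/-- Sup-norm comparison of the local and convolved nonlinearities: if `∫ w = a`,
`|u|²` is `L`-Lipschitz, `‖u‖_∞ ≤ Mu`, and `|w(z)| ≤ C|z|^{−γ}` for `|z| ≥ 1`
with `γ > 3`, then with `w_N(x) = N^{3β} w(N^β x)` and `α = β(γ−3)/(γ−2)`,
`‖a|u|² − w_N * |u|²‖_∞ ≤ ‖w‖₁ L N^{−α} + (8πC/(γ−3)) ‖u‖_∞² N^{−α}`. -/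
theorem local_vs_convolved_nonlinearity
    (w : EuclideanSpace ℝ (Fin 3) → ℝ) (hmeas : Measurable w)
    (hw1 : Integrable w) (a : ℝ) (ha : ∫ x, w x = a)
    (u : EuclideanSpace ℝ (Fin 3) → ℂ) (L Mu : ℝ)
    (hLip : ∀ x y : EuclideanSpace ℝ (Fin 3),
      |‖u x‖ ^ 2 - ‖u y‖ ^ 2| ≤ L * ‖x - y‖)
    (hMu : ∀ x, ‖u x‖ ≤ Mu)
    (C γ β : ℝ) (hC : 0 ≤ C) (hγ : 3 < γ) (hβ : 0 < β)
    (hdecay : ∀ z : EuclideanSpace ℝ (Fin 3), 1 ≤ ‖z‖ → |w z| ≤ C * ‖z‖ ^ (-γ))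
    (α : ℝ) (hα : α = β * (γ - 3) / (γ - 2)) (N : ℕ) (hN : 1 ≤ N) :
    ∀ x : EuclideanSpace ℝ (Fin 3),
      |a * ‖u x‖ ^ 2 -
          ∫ y, (N : ℝ) ^ (3 * β) * w (((N : ℝ) ^ β : ℝ) • (x - y)) * ‖u y‖ ^ 2|
        ≤ (∫ z, |w z|) * L * (N : ℝ) ^ (-α) +
          (8 * π * C / (γ - 3)) * Mu ^ 2 * (N : ℝ) ^ (-α) := by
  intro x
  have hN0 : (0:ℝ) < N := by exact_mod_cast Nat.lt_of_lt_of_le Nat.zero_lt_one hN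
  have hN1 : (1:ℝ) ≤ N := by exact_mod_cast hN
  set c : ℝ := (N:ℝ) ^ β with hcdef
  have hc : 0 < c := Real.rpow_pos_of_pos hN0 β
  have hγ2 : (0:ℝ) < γ - 2 := by linarith
  have hγ3 : (0:ℝ) < γ - 3 := by linarith
  have hβα : 0 < β - α := by
    rw [hα]
    have : β - β * (γ - 3) / (γ - 2) = β / (γ - 2) := by field_simp; ring
    rw [this]; positivity
  set R : ℝ := (N:ℝ) ^ (β - α) with hRdef
  have hR1 : (1:ℝ) ≤ R := Real.one_le_rpow hN1 hβα.le
  have hR0 : (0:ℝ) < R := lt_of_lt_of_le one_pos hR1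
  -- nonnegativity of L and Mu
  have hL0 : 0 ≤ L := by
    have h1 := hLip (EuclideanSpace.single 0 1) 0
    simp only [sub_zero, EuclideanSpace.norm_single, norm_one, mul_one] at h1
    exact le_trans (abs_nonneg _) h1
  have hMu0 : 0 ≤ Mu := le_trans (norm_nonneg _) (hMu x)
  -- continuity of |u|^2
  have hcont : Continuous fun y : EuclideanSpace ℝ (Fin 3) => ‖u y‖ ^ 2 := by
    apply (LipschitzWith.of_dist_le_mul (K := L.toNNReal)
      (f := fun y : EuclideanSpace ℝ (Fin 3) => ‖u y‖ ^ 2) ?_).continuous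
    intro y₁ y₂
    rw [Real.dist_eq, Real.coe_toNNReal L hL0, dist_eq_norm]
    exact hLip y₁ y₂
  -- the function appearing after change of variables
  set G : EuclideanSpace ℝ (Fin 3) → ℝ :=
    fun z => w z * ‖u (x - c⁻¹ • z)‖ ^ 2 with hGdef
  have hcontG : Continuous fun z : EuclideanSpace ℝ (Fin 3) => ‖u (x - c⁻¹ • z)‖ ^ 2 :=
    hcont.comp (continuous_const.sub (continuous_id.const_smul c⁻¹))
  have hGint : Integrable G := by
    have := hw1.bdd_mul hcontG.aestronglyMeasurable
      (c := Mu ^ 2) (Filter.Eventually.of_forall fun z => by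
        rw [Real.norm_eq_abs, abs_of_nonneg (by positivity)]
        exact pow_le_pow_left₀ (norm_nonneg _) (hMu _) 2)
    simpa [hGdef, mul_comm] using this
  -- change of variables
  have key : ∫ y, (N : ℝ) ^ (3 * β) * w (c • (x - y)) * ‖u y‖ ^ 2 = ∫ z, G z := by
    have hc3 : (N:ℝ) ^ (3 * β) = c ^ (3:ℕ) := by
      rw [hcdef, ← Real.rpow_natCast ((N:ℝ) ^ β) 3, ← Real.rpow_mul hN0.le]
      norm_num [mul_comm]
    have h1 : ∀ y, w (c • (x - y)) * ‖u y‖ ^ 2 = G (c • (x - y)) := by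
      intro y
      rw [hGdef]
      simp only [inv_smul_smul₀ hc.ne', sub_sub_cancel]
    calc ∫ y, (N : ℝ) ^ (3 * β) * w (c • (x - y)) * ‖u y‖ ^ 2
        = ∫ y, c ^ (3:ℕ) * G (c • (x - y)) := by
          rw [hc3]; simp_rw [mul_assoc, h1]
      _ = c ^ (3:ℕ) * ∫ y, G (c • (x - y)) := integral_const_mul _ _
      _ = c ^ (3:ℕ) * ∫ v, G (c • v) :=
          congrArg _ (integral_sub_left_eq_self (fun v => G (c • v)) volume x)
      _ = c ^ (3:ℕ) * ((c ^ Module.finrank ℝ (EuclideanSpace ℝ (Fin 3)))⁻¹ • ∫ z, G z) :=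
          congrArg _ (Measure.integral_comp_smul_of_nonneg volume G c (hR := hc.le))
      _ = ∫ z, G z := by
          rw [finrank_euclideanSpace, Fintype.card_fin, smul_eq_mul, ← mul_assoc,
            mul_inv_cancel₀ (by positivity), one_mul]
  -- rewrite a * |u x|^2 as an integral
  have ha' : a * ‖u x‖ ^ 2 = ∫ z, w z * ‖u x‖ ^ 2 := by
    rw [integral_mul_const, ha]
  -- the difference
  set D : EuclideanSpace ℝ (Fin 3) → ℝ :=
    fun z => ‖u x‖ ^ 2 - ‖u (x - c⁻¹ • z)‖ ^ 2 with hDdef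
  have hI1 : Integrable fun z => w z * ‖u x‖ ^ 2 := hw1.mul_const _
  have hdiff : a * ‖u x‖ ^ 2 - (∫ y, (N : ℝ) ^ (3 * β) * w (c • (x - y)) * ‖u y‖ ^ 2)
      = ∫ z, w z * D z := by
    rw [key, ha']
    rw [← integral_sub hI1 hGint]
    congr 1
    ext z
    rw [hDdef, hGdef]
    ring
  rw [hdiff]
  have hφint : Integrable fun z => w z * D z := by
    have h := hI1.sub hGint
    convert h using 2 with z
    simp only [Pi.sub_apply, hDdef, hGdef]
    ring
  -- bound by the integral of the absolute value
  have habs : |∫ z, w z * D z| ≤ ∫ z, |w z * D z| := by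
    simpa only [Real.norm_eq_abs] using
      norm_integral_le_integral_norm (μ := volume) (fun z => w z * D z)
  refine le_trans habs ?_
  -- split the integral
  have hmeasS : MeasurableSet {z : EuclideanSpace ℝ (Fin 3) | R < ‖z‖} :=
    measurableSet_lt measurable_const measurable_norm
  have hsplit : ∫ z, |w z * D z| =
      (∫ z in {z : EuclideanSpace ℝ (Fin 3) | R < ‖z‖}ᶜ, |w z * D z|) +
      ∫ z in {z : EuclideanSpace ℝ (Fin 3) | R < ‖z‖}, |w z * D z| := by
    rw [← integral_add_compl hmeasS hφint.abs]
    ring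
  rw [hsplit]
  have hNα : c⁻¹ * R = (N:ℝ) ^ (-α) := by
    rw [hcdef, hRdef, ← Real.rpow_neg hN0.le, ← Real.rpow_add hN0]
    ring_nf
  -- bound on the ball
  have hb1 : (∫ z in {z : EuclideanSpace ℝ (Fin 3) | R < ‖z‖}ᶜ, |w z * D z|)
      ≤ (∫ z, |w z|) * L * (N : ℝ) ^ (-α) := by
    have hptwise : ∀ z ∈ {z : EuclideanSpace ℝ (Fin 3) | R < ‖z‖}ᶜ,
        |w z * D z| ≤ |w z| * (L * (N : ℝ) ^ (-α)) := by
      intro z hz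
      simp only [Set.mem_compl_iff, Set.mem_setOf_eq, not_lt] at hz
      rw [abs_mul]
      apply mul_le_mul_of_nonneg_left _ (abs_nonneg _)
      calc |D z| ≤ L * ‖x - (x - c⁻¹ • z)‖ := hLip x _
        _ = L * (c⁻¹ * ‖z‖) := by
            rw [sub_sub_cancel, norm_smul, Real.norm_eq_abs, abs_of_nonneg (by positivity)]
        _ ≤ L * (c⁻¹ * R) := by
            apply mul_le_mul_of_nonneg_left _ hL0
            exact mul_le_mul_of_nonneg_left hz (by positivity)
        _ = L * (N : ℝ) ^ (-α) := by rw [hNα]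
    calc (∫ z in {z : EuclideanSpace ℝ (Fin 3) | R < ‖z‖}ᶜ, |w z * D z|)
        ≤ ∫ z in {z : EuclideanSpace ℝ (Fin 3) | R < ‖z‖}ᶜ, |w z| * (L * (N : ℝ) ^ (-α)) := by
          apply setIntegral_mono_on hφint.abs.integrableOn
            (hw1.abs.mul_const _).integrableOn hmeasS.compl hptwise
      _ ≤ ∫ z, |w z| * (L * (N : ℝ) ^ (-α)) := by
          apply setIntegral_le_integral (hw1.abs.mul_const _)
          filter_upwards with z
          positivity
      _ = (∫ z, |w z|) * L * (N : ℝ) ^ (-α) := by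
          rw [integral_mul_const]; ring
  -- bound on the complement
  have hb2 : (∫ z in {z : EuclideanSpace ℝ (Fin 3) | R < ‖z‖}, |w z * D z|)
      ≤ (8 * π * C / (γ - 3)) * Mu ^ 2 * (N : ℝ) ^ (-α) := by
    have hptwise : ∀ z ∈ {z : EuclideanSpace ℝ (Fin 3) | R < ‖z‖},
        |w z * D z| ≤ ‖z‖ ^ (-γ) * (2 * Mu ^ 2 * C) := by
      intro z hz
      have hz1 : (1:ℝ) ≤ ‖z‖ := hR1.trans (le_of_lt hz)
      rw [abs_mul]
      have hDb : |D z| ≤ 2 * Mu ^ 2 := by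
        rw [hDdef]
        have h1 : ‖u x‖ ^ 2 ≤ Mu ^ 2 := pow_le_pow_left₀ (norm_nonneg _) (hMu _) 2
        have h2 : ‖u (x - c⁻¹ • z)‖ ^ 2 ≤ Mu ^ 2 := pow_le_pow_left₀ (norm_nonneg _) (hMu _) 2
        have h3 : (0:ℝ) ≤ ‖u x‖ ^ 2 := by positivity
        have h4 : (0:ℝ) ≤ ‖u (x - c⁻¹ • z)‖ ^ 2 := by positivity
        rw [abs_sub_le_iff]
        constructor <;> linarith
      calc |w z| * |D z| ≤ (C * ‖z‖ ^ (-γ)) * (2 * Mu ^ 2) :=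
            mul_le_mul (hdecay z hz1) hDb (abs_nonneg _)
              (by positivity)
        _ = ‖z‖ ^ (-γ) * (2 * Mu ^ 2 * C) := by ring
    have hcalc : ∫ z in {z : EuclideanSpace ℝ (Fin 3) | R < ‖z‖}, ‖z‖ ^ (-γ) * (2 * Mu ^ 2 * C)
        = (8 * π * C / (γ - 3)) * Mu ^ 2 * (N : ℝ) ^ (-α) := by
      rw [integral_mul_const, tail_integral' hγ hR0]
      have hRexp : R ^ (3 - γ) = (N:ℝ) ^ (-α) := by
        rw [hRdef, ← Real.rpow_mul hN0.le]
        congr 1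
        rw [hα]; field_simp; ring
      rw [hRexp]; ring
    calc (∫ z in {z : EuclideanSpace ℝ (Fin 3) | R < ‖z‖}, |w z * D z|)
        ≤ ∫ z in {z : EuclideanSpace ℝ (Fin 3) | R < ‖z‖}, ‖z‖ ^ (-γ) * (2 * Mu ^ 2 * C) := by
          apply setIntegral_mono_on hφint.abs.integrableOn
            ((tail_integrable' hγ hR1).mul_const _) hmeasS hptwise
      _ = (8 * π * C / (γ - 3)) * Mu ^ 2 * (N : ℝ) ^ (-α) := hcalc
  exact add_le_add hb1 hb2
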